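/- For integers r ≥ d ≥ 3, γ_r(d) < K_d · 2^{(1/2 − ε_d) r}, where ε_d = 1/(2(2^d − 1)) and K_d = (2^d − 1)·2^{2^{d−1} − 3/2 + ε_d}. In particular γ_r(3) = O(2^{3r/7}). -/

import Mathlib

/-- A subset `C` of `F_2^r` is `d`-complete if through every point `v` there is a
`d`-flat contained in `C ∪ {v}`; i.e. there is a `d`-dimensional subspace `L`
with `v + (L \ {0}) ⊆ C`. -/
def KakeyaComplete (r d : ℕ) (C : Set (Fin r → ZMod 2)) : Prop :=
  ∀ v : Fin r → ZMod 2, ∃ L : Submodule (ZMod 2) (Fin r → ZMod 2),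
    Module.finrank (ZMod 2) L = d ∧ ∀ x ∈ L, x ≠ 0 → v + x ∈ C

/-- `gamma r d` is the smallest size of a `d`-complete subset of `F_2^r`. -/
noncomputable def gamma (r d : ℕ) : ℕ :=
  sInf {n | ∃ C : Finset (Fin r → ZMod 2), C.card = n ∧ KakeyaComplete r d ↑C}

/-- A subset `B` of `F_2^r` is `d`-non-blocking if for every `v` there is a
subspace `L` of dimension `r - d` (codimension `d`) with `(v + (L \ {0})) ∩ B = ∅`. -/
def KakeyaNonBlocking (r d : ℕ) (B : Set (Fin r → ZMod 2)) : Prop :=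
  ∀ v : Fin r → ZMod 2, ∃ L : Submodule (ZMod 2) (Fin r → ZMod 2),
    Module.finrank (ZMod 2) L = r - d ∧ ∀ x ∈ L, x ≠ 0 → v + x ∉ B

/-- `beta r d` is the largest size of a `d`-non-blocking subset of `F_2^r`. -/
noncomputable def beta (r d : ℕ) : ℕ :=
  sSup {n | ∃ B : Finset (Fin r → ZMod 2), B.card = n ∧ KakeyaNonBlocking r d ↑B}

namespace KakeyaAux

open Finset

abbrev V (d : ℕ) := Fin d → ZMod 2

def dotp {d : ℕ} (t u : V d) : ZMod 2 := ∑ k, t k * u k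

lemma dotp_add_left {d : ℕ} (s s' u : V d) : dotp (s + s') u = dotp s u + dotp s' u := by
  simp [dotp, add_mul, Finset.sum_add_distrib]

lemma dotp_smul_left {d : ℕ} (c : ZMod 2) (s u : V d) : dotp (c • s) u = c * dotp s u := by
  simp [dotp, Finset.mul_sum, mul_assoc]

lemma dotp_add_right {d : ℕ} (t u u' : V d) : dotp t (u + u') = dotp t u + dotp t u' := by
  simp [dotp, mul_add, Finset.sum_add_distrib]

lemma zmod2_ne_zero_iff (a : ZMod 2) : ¬ a = 0 ↔ a = 1 := by revert a; decide

lemma zmod2_add_self (a : ZMod 2) : a + a = 0 := by revert a; decide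

lemma card_zero_on (r : ℕ) (T : Finset (Fin r)) :
    (univ.filter fun x : Fin r → ZMod 2 => ∀ p ∈ T, x p = 0).card = 2 ^ (r - T.card) := by
  have key : (univ.filter fun x : Fin r → ZMod 2 => ∀ p ∈ T, x p = 0).card
      = Fintype.card ({p : Fin r // p ∉ T} → ZMod 2) := by
    rw [← Finset.card_univ]
    apply Finset.card_nbij' (fun x => fun p => x p.1)
      (fun y => fun p => if hp : p ∈ T then 0 else y ⟨p, hp⟩)
    · intros; simp
    · intro y _
      simp only [mem_coe, mem_filter, mem_univ, true_and]
      intro p hp; simp [hp]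
    · intro x hx
      funext p
      by_cases hp : p ∈ T
      · simp only [hp, dif_pos]
        exact ((mem_filter.mp hx).2 p hp).symm
      · simp [hp]
    · intro y _
      funext p
      simp [p.2]
  rw [key, Fintype.card_fun, ZMod.card]
  congr 1
  rw [Fintype.card_subtype_compl, Fintype.card_fin, Fintype.card_coe]

/-- The core construction: for any "direction pattern" `h`, there is a `d`-complete set whose
size is controlled by the orthogonality counts of `h`. -/
lemma gamma_le_construction (r d : ℕ) (hr : d ≤ r) (h : Fin (r - d) → V d) :
    gamma r d ≤ ∑ t ∈ univ.filter (fun t : V d => t ≠ 0),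
      2 ^ (d + (univ.filter fun i : Fin (r - d) => dotp t (h i) = 0).card) := by
  have hrd : d + (r - d) = r := Nat.add_sub_cancel' hr
  let E : Fin d ⊕ Fin (r - d) ≃ Fin r := finSumFinEquiv.trans (finCongr hrd)
  let cube : V d → Finset (Fin r → ZMod 2) := fun t =>
    univ.filter fun x => ∀ i : Fin (r - d), dotp t (h i) = 1 → x (E (Sum.inr i)) = 0
  let C : Finset (Fin r → ZMod 2) := (univ.filter fun t : V d => t ≠ 0).biUnion cube
  have cube_card : ∀ t : V d,
      (cube t).card = 2 ^ (d + (univ.filter fun i : Fin (r - d) => dotp t (h i) = 0).card) := by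
    intro t
    have himg : cube t = univ.filter fun x => ∀ p ∈
        (univ.filter fun i : Fin (r - d) => dotp t (h i) = 1).image (fun i => E (Sum.inr i)),
        x p = 0 := by
      apply Finset.filter_congr
      intro x _
      constructor
      · intro hx p hp
        rcases Finset.mem_image.mp hp with ⟨i, hi, rfl⟩
        exact hx i (Finset.mem_filter.mp hi).2
      · intro hx i hi
        exact hx (E (Sum.inr i)) (Finset.mem_image_of_mem _ (Finset.mem_filter.mpr ⟨mem_univ _, hi⟩))
    rw [himg, card_zero_on]
    have hinj : Function.Injective fun i : Fin (r - d) => E (Sum.inr i) :=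
      E.injective.comp Sum.inr_injective
    rw [Finset.card_image_of_injective _ hinj]
    congr 1
    have hsplit : (univ.filter fun i : Fin (r - d) => dotp t (h i) = 0).card
        + (univ.filter fun i : Fin (r - d) => dotp t (h i) = 1).card = r - d := by
      have e : (univ.filter fun i : Fin (r - d) => dotp t (h i) = 1)
          = (univ.filter fun i : Fin (r - d) => ¬ dotp t (h i) = 0) := by
        apply Finset.filter_congr; intro i _; exact (zmod2_ne_zero_iff _).symm
      rw [e, Finset.card_filter_add_card_filter_not]
      simp
    omega
  have hcomplete : KakeyaComplete r d ↑C := by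
    intro v
    let ℓ : V d →ₗ[ZMod 2] (Fin r → ZMod 2) :=
      { toFun := fun s => fun p =>
          Sum.elim (fun k => s k) (fun i => dotp s (h i) * v (E (Sum.inr i))) (E.symm p)
        map_add' := by
          intro s s'; funext p
          rcases hp : E.symm p with k | i <;>
            simp [hp, dotp_add_left, add_mul]
        map_smul' := by
          intro c s; funext p
          rcases hp : E.symm p with k | i <;>
            simp [hp, dotp_smul_left, mul_assoc] }
    have hinj : Function.Injective ℓ := by
      intro s s' hss
      funext k
      have := congrFun hss (E (Sum.inl k))
      simpa [ℓ, Equiv.symm_apply_apply] using this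
    refine ⟨LinearMap.range ℓ, ?_, ?_⟩
    · rw [LinearMap.finrank_range_of_inj hinj, Module.finrank_fintype_fun_eq_card,
        Fintype.card_fin]
    · rintro x ⟨s, rfl⟩ hx
      have hs : s ≠ 0 := by
        rintro rfl; exact hx (map_zero ℓ)
      have hmem : v + ℓ s ∈ C := by
        apply Finset.mem_biUnion.mpr
        refine ⟨s, Finset.mem_filter.mpr ⟨mem_univ _, hs⟩, ?_⟩
        apply Finset.mem_filter.mpr
        refine ⟨mem_univ _, ?_⟩
        intro i hi
        have hx' : ℓ s (E (Sum.inr i)) = dotp s (h i) * v (E (Sum.inr i)) := by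
          simp [ℓ, Equiv.symm_apply_apply]
        show v (E (Sum.inr i)) + ℓ s (E (Sum.inr i)) = 0
        rw [hx', hi, one_mul]
        exact zmod2_add_self _
      exact hmem
  have hmem : C.card ∈ {n | ∃ C : Finset (Fin r → ZMod 2), C.card = n ∧ KakeyaComplete r d ↑C} :=
    ⟨C, rfl, hcomplete⟩
  calc gamma r d ≤ C.card := Nat.sInf_le hmem
    _ ≤ ∑ t ∈ univ.filter (fun t : V d => t ≠ 0), (cube t).card := Finset.card_biUnion_le
    _ = _ := Finset.sum_congr rfl fun t _ => cube_card t

lemma sum_mod_cycle (f : ℕ → ℕ) (n q b : ℕ) (hb : b ≤ n) :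
    ∑ i ∈ range (q * n + b), f (i % n) = q * (∑ u ∈ range n, f u) + ∑ u ∈ range b, f u := by
  induction q with
  | zero =>
      simp only [Nat.zero_mul, Nat.zero_add, zero_mul, zero_add]
      exact Finset.sum_congr rfl fun i hi => by
        rw [Nat.mod_eq_of_lt (lt_of_lt_of_le (mem_range.mp hi) hb)]
  | succ q ih =>
      have h1 : (q + 1) * n + b = n + (q * n + b) := by ring
      rw [h1, Finset.sum_range_add]
      have e1 : ∑ x ∈ range n, f (x % n) = ∑ x ∈ range n, f x :=
        Finset.sum_congr rfl fun x hx => by rw [Nat.mod_eq_of_lt (mem_range.mp hx)]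
      have e2 : ∑ x ∈ range (q * n + b), f ((n + x) % n)
          = ∑ x ∈ range (q * n + b), f (x % n) :=
        Finset.sum_congr rfl fun x _ => by rw [Nat.add_mod_left]
      rw [e1, e2, ih]
      ring

lemma card_ker_bound {d : ℕ} (hd : 1 ≤ d) (t : V d) (ht : t ≠ 0) :
    (univ.filter fun w : V d => w ≠ 0 ∧ dotp t w = 0).card ≤ 2 ^ (d - 1) - 1 := by
  obtain ⟨k, hk⟩ : ∃ k, t k ≠ 0 := Function.ne_iff.mp ht
  have hk1 : t k = 1 := (zmod2_ne_zero_iff _).mp hk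
  set ek : V d := fun l => if l = k then 1 else 0 with hek
  have hdot_ek : dotp t ek = 1 := by
    simp [dotp, hek, mul_ite, mul_one, mul_zero, Finset.sum_ite_eq', hk1]
  have S0S1 : (univ.filter fun w : V d => dotp t w = 0).card
      + (univ.filter fun w : V d => dotp t w = 1).card = 2 ^ d := by
    have e : (univ.filter fun w : V d => dotp t w = 1)
        = (univ.filter fun w : V d => ¬ dotp t w = 0) := by
      apply Finset.filter_congr; intro w _; exact (zmod2_ne_zero_iff _).symm
    rw [e, Finset.card_filter_add_card_filter_not, Finset.card_univ,
      Fintype.card_fun, ZMod.card, Fintype.card_fin]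
  have hle : (univ.filter fun w : V d => dotp t w = 0).card
      ≤ (univ.filter fun w : V d => dotp t w = 1).card := by
    apply Finset.card_le_card_of_injOn (fun w => w + ek)
    · intro w hw
      simp only [mem_coe, mem_filter, mem_univ, true_and] at hw ⊢
      rw [dotp_add_right, hw, hdot_ek, zero_add]
    · intro a _ b _ hab
      exact add_right_cancel hab
  have hz : (0 : V d) ∈ univ.filter fun w : V d => dotp t w = 0 := by
    exact Finset.mem_filter.mpr ⟨mem_univ _, by simp [dotp]⟩
  have hsub : (univ.filter fun w : V d => w ≠ 0 ∧ dotp t w = 0)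
      ⊆ (univ.filter fun w : V d => dotp t w = 0).erase 0 := by
    intro w hw
    simp only [mem_filter, mem_univ, true_and] at hw
    exact Finset.mem_erase.mpr ⟨hw.1, by simp [hw.2]⟩
  have hcard := Finset.card_le_card hsub
  rw [Finset.card_erase_of_mem hz] at hcard
  have h2d : 2 ^ d = 2 * 2 ^ (d - 1) := by
    conv_lhs => rw [← Nat.sub_add_cancel hd]
    ring
  omega

lemma sum_ind_le_ker {d n : ℕ} (hd : 1 ≤ d) (t : V d) (ht : t ≠ 0) (g : ℕ → V d)
    (hg0 : ∀ u < n, g u ≠ 0) (hginj : ∀ u < n, ∀ u' < n, g u = g u' → u = u') :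
    (∑ u ∈ range n, if dotp t (g u) = 0 then 1 else 0) ≤ 2 ^ (d - 1) - 1 := by
  rw [← Finset.card_filter]
  refine le_trans (Finset.card_le_card_of_injOn g ?_ ?_) (card_ker_bound hd t ht)
  · intro u hu
    rcases Finset.mem_filter.mp hu with ⟨hu1, hu2⟩
    exact Finset.mem_filter.mpr ⟨mem_univ _, hg0 u (mem_range.mp hu1), hu2⟩
  · intro a ha b hb hab
    have ha' := mem_range.mp (Finset.mem_filter.mp (by exact_mod_cast ha)).1
    have hb' := mem_range.mp (Finset.mem_filter.mp (by exact_mod_cast hb)).1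
    exact hginj a ha' b hb' hab

def ord3 : ℕ → V 3
  | 0 => ![0,0,1]
  | 1 => ![0,1,0]
  | 2 => ![1,0,0]
  | 3 => ![1,1,1]
  | 4 => ![0,1,1]
  | 5 => ![1,0,1]
  | _ => ![1,1,0]

lemma ord3_full : ∀ t : V 3, t ≠ 0 →
    (∑ u ∈ range 7, if dotp t (ord3 u) = 0 then 1 else 0) = 3 := by decide

def G (j : ℕ) : ℕ := ∑ t ∈ univ.filter (fun t : V 3 => t ≠ 0),
  2 ^ (∑ u ∈ range j, if dotp t (ord3 u) = 0 then 1 else 0)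

lemma two_mul_add_six_le : ∀ d : ℕ, 4 ≤ d → 2 * d + 6 ≤ 2 ^ d := by
  intro d hd
  induction d, hd using Nat.le_induction with
  | base => norm_num
  | succ k hk ih =>
      have h2 : 2 ≤ 2 ^ k := by
        calc 2 = 2 ^ 1 := by norm_num
        _ ≤ 2 ^ k := Nat.pow_le_pow_right (by norm_num) (by omega)
      have h3 : 2 ^ (k + 1) = 2 * 2 ^ k := by ring
      omega

lemma rpow_nat_lt_rpow {b : ℕ} {x : ℝ} (hbx : (b : ℝ) < x) : ((2 : ℝ) ^ b) < (2 : ℝ) ^ x := by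
  have h := Real.rpow_lt_rpow_of_exponent_lt (x := (2:ℝ)) one_lt_two hbx
  rwa [Real.rpow_natCast] at h


lemma key_ineq (d m j Mn : ℕ) (hdm : d + 2 ≤ m) (hMn : Mn = min j m) :
    2 * (2 * m + 1) * (d + Mn) < 4 * m ^ 2 + 2 * m * (d + j) := by
  rcases Nat.le_total j m with hjm | hmj
  · rw [hMn, min_eq_left hjm]
    have hs : d + j + 2 ≤ 2 * m := by omega
    nlinarith [Nat.mul_le_mul_left (2 * m + 2) hs]
  · rw [hMn, min_eq_right hmj]
    nlinarith [Nat.mul_le_mul_left m hdm,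
      Nat.mul_le_mul_left (2 * m) (Nat.add_le_add_left hmj d)]

lemma lt7 {c b : ℕ} {x : ℝ} (hcb : c ≤ 7 * 2 ^ b) (hbx : (b : ℝ) < x) :
    (c : ℝ) < 7 * (2 : ℝ) ^ x := by
  have h := rpow_nat_lt_rpow hbx
  have hcb' : (c : ℝ) ≤ 7 * (2 : ℝ) ^ b := by exact_mod_cast hcb
  linarith

lemma hGj (j : ℕ) (hj : j < 7) : (G j : ℝ) < 7 * (2:ℝ) ^ ((6 + 3 * (j:ℝ)) / 7) := by
  interval_cases j
  · rw [show G 0 = 7 from by decide]; exact lt7 (b := 0) (by norm_num) (by norm_num)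
  · rw [show G 1 = 10 from by decide]; exact lt7 (b := 1) (by norm_num) (by norm_num)
  · rw [show G 2 = 14 from by decide]; exact lt7 (b := 1) (by norm_num) (by norm_num)
  · rw [show G 3 = 19 from by decide]; exact lt7 (b := 2) (by norm_num) (by norm_num)
  · rw [show G 4 = 25 from by decide]; exact lt7 (b := 2) (by norm_num) (by norm_num)
  · rw [show G 5 = 34 from by decide]
    rw [show ((6:ℝ) + 3 * ((5:ℕ):ℝ)) / 7 = ((3:ℕ):ℝ) by push_cast; norm_num,
      Real.rpow_natCast]
    norm_num
  · rw [show G 6 = 44 from by decide]; exact lt7 (b := 3) (by norm_num) (by norm_num)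

/-- The main quantitative bound. -/
lemma main_bound (r d : ℕ) (hd : 3 ≤ d) (hr : d ≤ r) :
    (gamma r d : ℝ) <
      ((2 : ℝ) ^ d - 1) *
        2 ^ ((2 : ℝ) ^ (d - 1) - 3 / 2 + 1 / (2 * ((2 : ℝ) ^ d - 1))) *
        2 ^ ((1 / 2 - 1 / (2 * ((2 : ℝ) ^ d - 1))) * (r : ℝ)) := by
  rcases Nat.lt_or_ge d 4 with hd4 | hd4
  · -- the case d = 3
    have h3 : d = 3 := by omega
    subst h3
    obtain ⟨q, j, hj, hqj⟩ : ∃ q j, j < 7 ∧ r - 3 = q * 7 + j :=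
      ⟨(r - 3) / 7, (r - 3) % 7, Nat.mod_lt _ (by norm_num), by omega⟩
    have hgam : gamma r 3 ≤ 2 ^ (3 + 3 * q) * G j := by
      have hcon := gamma_le_construction r 3 hr (fun i => ord3 (↑i % 7))
      have hsum : ∑ t ∈ univ.filter (fun t : V 3 => t ≠ 0),
          2 ^ (3 + (univ.filter fun i : Fin (r - 3) => dotp t (ord3 (↑i % 7)) = 0).card)
          = 2 ^ (3 + 3 * q) * G j := by
        rw [G, Finset.mul_sum]
        apply Finset.sum_congr rfl
        intro t ht
        have htne : t ≠ 0 := (Finset.mem_filter.mp ht).2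
        have hct : (univ.filter fun i : Fin (r - 3) => dotp t (ord3 (↑i % 7)) = 0).card
            = 3 * q + (∑ u ∈ range j, if dotp t (ord3 u) = 0 then 1 else 0) := by
          rw [Finset.card_filter,
            Fin.sum_univ_eq_sum_range
              (fun m => if dotp t (ord3 (m % 7)) = 0 then 1 else 0) (r - 3),
            hqj, sum_mod_cycle (fun u => if dotp t (ord3 u) = 0 then 1 else 0) 7 q j hj.le,
            ord3_full t htne]
          ring
        rw [hct, ← pow_add]
        congr 1
        ring
      calc gamma r 3 ≤ _ := hcon
        _ = _ := hsum
    have hGj' := hGj j hj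
    have hr3 : (r : ℝ) = 3 + 7 * (q : ℝ) + (j : ℝ) := by
      have hnat : r = 3 + (q * 7 + j) := by omega
      rw [hnat]; push_cast; ring
    have hpowpos : (0:ℝ) < (2:ℝ) ^ (3 + 3 * q) := by positivity
    calc (gamma r 3 : ℝ) ≤ ((2 ^ (3 + 3 * q) * G j : ℕ) : ℝ) := by exact_mod_cast hgam
      _ = (2:ℝ) ^ (3 + 3 * q) * (G j : ℝ) := by push_cast; ring
      _ < (2:ℝ) ^ (3 + 3 * q) * (7 * 2 ^ ((6 + 3 * (j:ℝ)) / 7)) :=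
          mul_lt_mul_of_pos_left hGj' hpowpos
      _ = 7 * ((2:ℝ) ^ (((3 + 3 * q : ℕ)) : ℝ) * 2 ^ ((6 + 3 * (j:ℝ)) / 7)) := by
          rw [Real.rpow_natCast]; ring
      _ = 7 * 2 ^ ((((3 + 3 * q : ℕ)) : ℝ) + (6 + 3 * (j:ℝ)) / 7) := by
          rw [← Real.rpow_add (by norm_num : (0:ℝ) < 2)]
      _ = ((2 : ℝ) ^ (3:ℕ) - 1) *
            2 ^ ((2 : ℝ) ^ (3 - 1 : ℕ) - 3 / 2 + 1 / (2 * ((2 : ℝ) ^ (3:ℕ) - 1))) *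
            2 ^ ((1 / 2 - 1 / (2 * ((2 : ℝ) ^ (3:ℕ) - 1))) * (r : ℝ)) := by
          rw [mul_assoc, ← Real.rpow_add (by norm_num : (0:ℝ) < 2), hr3]
          norm_num
          congr 1
          push_cast
          ring
  · -- the case d ≥ 4
    have hd1 : 1 ≤ d := by omega
    have hm1 : (1:ℕ) ≤ 2 ^ (d - 1) := Nat.one_le_two_pow
    have h2d : (2:ℕ) ^ d = 2 * 2 ^ (d - 1) := by
      conv_lhs => rw [← Nat.sub_add_cancel hd1]
      rw [pow_succ]; ring
    set n : ℕ := 2 ^ d - 1 with hndef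
    set m : ℕ := 2 ^ (d - 1) - 1 with hmdef
    have hn2m : n = 2 * m + 1 := by omega
    have hn : 0 < n := by omega
    have hdm : d + 2 ≤ m := by
      have := two_mul_add_six_le d hd4
      omega
    obtain ⟨q, j, hj, hqj⟩ : ∃ q j, j < n ∧ r - d = q * n + j :=
      ⟨(r - d) / n, (r - d) % n, Nat.mod_lt _ hn, by
        rw [Nat.mul_comm]; exact (Nat.div_add_mod _ _).symm⟩
    -- an enumeration of the nonzero vectors
    have hcardV : Fintype.card (V d) = 2 ^ d := by
      rw [Fintype.card_fun, ZMod.card, Fintype.card_fin]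
    have hcardNZ : Fintype.card {w : V d // w ≠ 0} = n := by
      have h2 := Fintype.card_subtype_compl (fun w : V d => w = 0)
      rw [Fintype.card_subtype_eq (0 : V d), hcardV] at h2
      exact h2
    set σ := Fintype.equivFinOfCardEq hcardNZ with hσdef
    set g : ℕ → V d := fun u => (σ.symm ⟨u % n, Nat.mod_lt _ hn⟩ : {w : V d // w ≠ 0}).val
      with hgdef
    have hg0 : ∀ u, g u ≠ 0 := fun u => (σ.symm _).2
    have hgmodn : ∀ u, g (u % n) = g u := by
      intro u
      have hmm : u % n % n = u % n := Nat.mod_mod_of_dvd u dvd_rfl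
      simp only [hgdef, hmm]
    have hginj : ∀ u < n, ∀ u' < n, g u = g u' → u = u' := by
      intro u hu u' hu' he
      have h1 : σ.symm ⟨u % n, Nat.mod_lt _ hn⟩ = σ.symm ⟨u' % n, Nat.mod_lt _ hn⟩ :=
        Subtype.ext he
      have h2 := σ.symm.injective h1
      have h3 : u % n = u' % n := congrArg Fin.val h2
      rwa [Nat.mod_eq_of_lt hu, Nat.mod_eq_of_lt hu'] at h3
    set Mn : ℕ := min j m with hMndef
    -- counting bound for each nonzero t
    have hct : ∀ t : V d, t ≠ 0 →
        (univ.filter fun i : Fin (r - d) => dotp t (g ↑i) = 0).card ≤ q * m + Mn := by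
      intro t ht
      have hA := sum_ind_le_ker (n := n) hd1 t ht g (fun u _ => hg0 u) hginj
      rw [Finset.card_filter,
        Fin.sum_univ_eq_sum_range (fun mm => if dotp t (g mm) = 0 then 1 else 0) (r - d)]
      have hper : ∀ i : ℕ, (if dotp t (g i) = 0 then (1:ℕ) else 0)
          = (fun u => if dotp t (g u) = 0 then (1:ℕ) else 0) (i % n) := by
        intro i; simp only [hgmodn]
      calc ∑ i ∈ range (r - d), (if dotp t (g i) = 0 then (1:ℕ) else 0)
          = ∑ i ∈ range (r - d), (fun u => if dotp t (g u) = 0 then (1:ℕ) else 0) (i % n) :=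
            Finset.sum_congr rfl fun i _ => hper i
        _ = q * (∑ u ∈ range n, if dotp t (g u) = 0 then (1:ℕ) else 0)
            + ∑ u ∈ range j, (if dotp t (g u) = 0 then (1:ℕ) else 0) := by
            rw [hqj]
            exact sum_mod_cycle (fun u => if dotp t (g u) = 0 then (1:ℕ) else 0) n q j hj.le
        _ ≤ q * m + Mn := by
            have hB1 : (∑ u ∈ range j, if dotp t (g u) = 0 then (1:ℕ) else 0) ≤ j := by
              calc (∑ u ∈ range j, if dotp t (g u) = 0 then (1:ℕ) else 0)
                  ≤ ∑ _u ∈ range j, 1 := Finset.sum_le_sum (fun u _ => by split <;> omega)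
                _ = j := by simp
            have hB2 : (∑ u ∈ range j, if dotp t (g u) = 0 then (1:ℕ) else 0)
                ≤ (∑ u ∈ range n, if dotp t (g u) = 0 then (1:ℕ) else 0) :=
              Finset.sum_le_sum_of_subset (Finset.range_subset_range.mpr hj.le)
            have hqA : q * (∑ u ∈ range n, if dotp t (g u) = 0 then (1:ℕ) else 0) ≤ q * m :=
              Nat.mul_le_mul_left q (by omega)
            omega
    have hNZ : (univ.filter fun t : V d => t ≠ 0) = (univ : Finset (V d)).erase 0 := by
      ext t; simp [Finset.mem_erase, and_comm]
    have hNZcard : (univ.filter fun t : V d => t ≠ 0).card = n := by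
      rw [hNZ, Finset.card_erase_of_mem (mem_univ _), Finset.card_univ, hcardV]
    have hgam : gamma r d ≤ n * 2 ^ (d + (q * m + Mn)) := by
      refine le_trans (gamma_le_construction r d hr (fun i => g ↑i)) ?_
      calc ∑ t ∈ univ.filter (fun t : V d => t ≠ 0),
            2 ^ (d + (univ.filter fun i : Fin (r - d) => dotp t (g ↑i) = 0).card)
          ≤ ∑ _t ∈ univ.filter (fun t : V d => t ≠ 0), 2 ^ (d + (q * m + Mn)) := by
            apply Finset.sum_le_sum
            intro t ht
            exact Nat.pow_le_pow_right (by norm_num)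
              (by have := hct t (Finset.mem_filter.mp ht).2; omega)
        _ = n * 2 ^ (d + (q * m + Mn)) := by
            rw [Finset.sum_const, hNZcard, smul_eq_mul]
    -- the key integer inequality
    have key : 2 * (2 * m + 1) * (d + Mn) < 4 * m ^ 2 + 2 * m * (d + j) :=
      key_ineq d m j Mn hdm hMndef
    -- real arithmetic
    set P : ℝ := (2:ℝ) ^ (d - 1 : ℕ) with hPdef
    set N : ℝ := (2:ℝ) ^ (d : ℕ) - 1 with hNdef
    have hPN : N = 2 * P - 1 := by
      rw [hNdef, hPdef]
      have hpow : (2:ℝ) ^ (d:ℕ) = 2 ^ ((d - 1) + 1 : ℕ) := by rw [Nat.sub_add_cancel hd1]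
      rw [hpow, pow_succ]; ring
    have hP1 : (1:ℝ) ≤ P := by
      have h := Nat.one_le_two_pow (n := d - 1)
      rw [hPdef]; exact_mod_cast h
    have hNpos : (0:ℝ) < N := by rw [hPN]; linarith
    have hmR : (m:ℝ) = P - 1 := by
      rw [hmdef, hPdef, Nat.cast_sub Nat.one_le_two_pow]
      push_cast; ring
    have hnR : (n:ℝ) = N := by
      rw [hndef, hNdef, Nat.cast_sub Nat.one_le_two_pow]
      push_cast; ring
    have hN2m : N = 2 * (m:ℝ) + 1 := by rw [hmR, hPN]; ring
    have hXE : ((d + (q * m + Mn) : ℕ) : ℝ)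
        < (P - 3 / 2 + 1 / (2 * N)) + (1 / 2 - 1 / (2 * N)) * (r : ℝ) := by
      have h2Npos : (0:ℝ) < 2 * N := by linarith
      rw [← mul_lt_mul_iff_right₀ h2Npos]
      have hEeq : 2 * N * ((P - 3 / 2 + 1 / (2 * N)) + (1 / 2 - 1 / (2 * N)) * (r : ℝ))
          = (N - 1) ^ 2 + (N - 1) * (r : ℝ) := by
        have hNne : N ≠ 0 := ne_of_gt hNpos
        field_simp
        rw [hPN]
        ring
      rw [hEeq]
      have hrR : (r:ℝ) = (d:ℝ) + (q:ℝ) * (2 * (m:ℝ) + 1) + (j:ℝ) := by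
        have hqj2 : r - d = q * (2 * m + 1) + j := hn2m ▸ hqj
        have hnat : r = d + (q * (2 * m + 1) + j) := by omega
        rw [hnat]; push_cast; ring
      have hXR : ((d + (q * m + Mn) : ℕ) : ℝ) = (d:ℝ) + (q:ℝ) * (m:ℝ) + (Mn:ℝ) := by
        push_cast; ring
      rw [hXR, hrR, hN2m]
      have keyR : 2 * (2 * (m:ℝ) + 1) * ((d:ℝ) + (Mn:ℝ))
          < 4 * (m:ℝ) ^ 2 + 2 * (m:ℝ) * ((d:ℝ) + (j:ℝ)) := by exact_mod_cast key
      nlinarith [keyR]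
    calc (gamma r d : ℝ) ≤ ((n * 2 ^ (d + (q * m + Mn)) : ℕ) : ℝ) := by exact_mod_cast hgam
      _ = N * (2:ℝ) ^ (((d + (q * m + Mn) : ℕ)) : ℝ) := by
          rw [Real.rpow_natCast]; push_cast [hnR]; ring
      _ < N * 2 ^ ((P - 3 / 2 + 1 / (2 * N)) + (1 / 2 - 1 / (2 * N)) * (r : ℝ)) :=
          mul_lt_mul_of_pos_left (Real.rpow_lt_rpow_of_exponent_lt one_lt_two hXE) hNpos
      _ = N * 2 ^ (P - 3 / 2 + 1 / (2 * N)) * 2 ^ ((1 / 2 - 1 / (2 * N)) * (r : ℝ)) := by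
          rw [Real.rpow_add (by norm_num : (0:ℝ) < 2), mul_assoc]

end KakeyaAux

theorem gamma_upper (r d : ℕ) (hd : 3 ≤ d) (hr : d ≤ r) :
    ((gamma r d : ℝ) <
      ((2 : ℝ) ^ d - 1) *
        2 ^ ((2 : ℝ) ^ (d - 1) - 3 / 2 + 1 / (2 * ((2 : ℝ) ^ d - 1))) *
        2 ^ ((1 / 2 - 1 / (2 * ((2 : ℝ) ^ d - 1))) * (r : ℝ))) ∧
    ∃ K : ℝ, 0 < K ∧ ∀ r' : ℕ, 3 ≤ r' →
      (gamma r' 3 : ℝ) ≤ K * 2 ^ ((3 * (r' : ℝ)) / 7) := by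
  constructor
  · exact KakeyaAux.main_bound r d hd hr
  · refine ⟨((2 : ℝ) ^ (3:ℕ) - 1) *
        2 ^ ((2 : ℝ) ^ (3 - 1 : ℕ) - 3 / 2 + 1 / (2 * ((2 : ℝ) ^ (3:ℕ) - 1))), ?_, ?_⟩
    · have h8 : (1:ℝ) < (2:ℝ)^(3:ℕ) := by norm_num
      have : (0:ℝ) < (2:ℝ)^(3:ℕ) - 1 := by linarith
      positivity
    · intro r' hr'
      have h := KakeyaAux.main_bound r' 3 le_rfl hr'
      have hexp : ((1:ℝ) / 2 - 1 / (2 * ((2 : ℝ) ^ (3:ℕ) - 1))) * (r' : ℝ)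
          = (3 * (r' : ℝ)) / 7 := by norm_num; ring
      rw [hexp] at h
      exact le_of_lt h
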